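/- At least one of the following holds for the associated directed graph Γ̃: (I) there exists a vertex v ∈ V(Γ̃) with no normal-arrow arising from v; (II) there exist vertices u, w ∈ V(Γ̃) with normal-arrows u ⟶ w and w ⟶ u; (III) there exists a cycle with alternate normal-arrows and dashed-arrows in Γ̃, and every such cycle is β-type. -/
import Mathlib


/-- Property (*): a bijection `f` between the vertex sets together with, for every vertex `v`,
a fixed isomorphism `φ v` from `Γ − v` onto `Γ' − f v` (encoded as an adjacency-preserving
bijection between the vertex sets with `v`, resp. `f v`, removed). -/
structure RCSetup {V V' : Type*} (G : SimpleGraph V) (G' : SimpleGraph V') where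
  f : V ≃ V'
  φ : ∀ v : V, {w : V // w ≠ v} ≃ {w' : V' // w' ≠ f v}
  adj_iff : ∀ (v : V) (x y : {w : V // w ≠ v}),
    G.Adj x.1 y.1 ↔ G'.Adj (φ v x).1 (φ v y).1

variable {V V' : Type*} {G : SimpleGraph V} {G' : SimpleGraph V'}

/-- There is a normal-arrow `v₁ ⟶ v₂` in the associated directed graph. -/
def RCSetup.Normal (H : RCSetup G G') (v₁ v₂ : V) : Prop :=
  ∃ h : v₂ ≠ v₁, ¬ G.Adj v₁ v₂ ∧ G'.Adj (H.f v₁) (H.φ v₁ ⟨v₂, h⟩).1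

/-- There is a dashed-arrow `v₁ ⇢ v₂` in the associated directed graph. -/
def RCSetup.Dashed (H : RCSetup G G') (v₁ v₂ : V) : Prop :=
  ∃ h : H.f v₂ ≠ H.f v₁, ¬ G'.Adj (H.f v₁) (H.f v₂) ∧ G.Adj v₁ ((H.φ v₁).symm ⟨H.f v₂, h⟩).1

open Classical

/-- Partial version of `φ v`: defined on every vertex except `v` itself. -/
noncomputable def RCSetup.pphi (H : RCSetup G G') (v x : V) : Option V' :=
  if h : x ≠ v then some (H.φ v ⟨x, h⟩).1 else none

/-- Partial version of `(φ v)⁻¹`: defined on every vertex except `f v` itself. -/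
noncomputable def RCSetup.pphiInv (H : RCSetup G G') (v : V) (x' : V') : Option V :=
  if h : x' ≠ H.f v then some ((H.φ v).symm ⟨x', h⟩).1 else none

/-- The `j`-th (partial) map in the alternating composition attached to a cycle `w`:
`φ_{w j}` if `j` is odd and `φ_{w j}⁻¹` if `j` is even, acting on the disjoint union
`V ⊕ V'`. -/
noncomputable def RCSetup.step (H : RCSetup G G') (w : ℕ → V) (j : ℕ) : V ⊕ V' → Option (V ⊕ V')
  | Sum.inl x => if j % 2 = 1 then (H.pphi (w j) x).map Sum.inr else none
  | Sum.inr x' => if j % 2 = 0 then (H.pphiInv (w j) x').map Sum.inl else none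

/-- `chainDown H w lo m z` applies the partial maps `step (lo+m-1), …, step (lo+1), step lo`
to `z`, innermost first (so `step lo` is applied last, i.e. outermost). -/
noncomputable def RCSetup.chainDown (H : RCSetup G G') (w : ℕ → V) (lo : ℕ) :
    ℕ → Option (V ⊕ V') → Option (V ⊕ V')
  | 0, z => z
  | (m + 1), z => H.chainDown w lo m (z.bind (H.step w (lo + m)))

/-- The innermost argument used to compute the `i`-th term of the sequences attached to a
cycle `w`: `w i` if `i` is even, and `f (w i)` if `i` is odd. -/
noncomputable def RCSetup.inner (H : RCSetup G G') (w : ℕ → V) (i : ℕ) : V ⊕ V' :=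
  if i % 2 = 0 then Sum.inl (w i) else Sum.inr (H.f (w i))

/-- The partial sequence `(b'_i)` in `V'` attached to a cycle `w` (starting at `w 1`):
`b'_1 = f (w 1)`, `b'_2 = φ_{w 1}(w 2)`, `b'_3 = φ_{w 1}(φ_{w 2}⁻¹(f (w 3)))`, …;
a term is `none` whenever some intermediate value is outside the domain of the next map. -/
noncomputable def RCSetup.bSeq' (H : RCSetup G G') (w : ℕ → V) (i : ℕ) : Option V' :=
  match H.chainDown w 1 (i - 1) (some (H.inner w i)) with
  | some (Sum.inr y) => some y
  | _ => none

/-- The partial sequence `(b_i)` in `V` attached to a cycle `w` (starting at `w 1`):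
`b_1 = w 2`, `b_2 = φ_{w 2}⁻¹(f (w 3))`, `b_3 = φ_{w 2}⁻¹(φ_{w 3}(w 4))`, …. -/
noncomputable def RCSetup.bSeq (H : RCSetup G G') (w : ℕ → V) (i : ℕ) : Option V :=
  match H.chainDown w 2 (i - 1) (some (H.inner w (i + 1))) with
  | some (Sum.inl y) => some y
  | _ => none

/-- Cyclic reading of the vertices `v 1, …, v (2k)` of a cycle: `cyc k v m = v m` for
`1 ≤ m ≤ 2k`, extended `2k`-periodically (in particular `cyc k v 0 = v (2k)`). -/
def cyc (k : ℕ) (v : ℕ → V) (m : ℕ) : V := v ((m + 2 * k - 1) % (2 * k) + 1)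

/-- The cycle `v 1, …, v (2k)` (with alternate normal- and dashed-arrows) is α-type:
there is `n₀ ≥ 1` such that for every `t = 0, …, k−1`, the sequences `b'^{(2t)}` and
`b^{(2t+1)}` obtained by starting the cycle at `v (2t+1)` are defined exactly for
`1 ≤ i ≤ n₀`, with `b'^{(2t)}_{n₀} = f (v (2t))` and `b^{(2t+1)}_{n₀} = v (2t+1)`
(indices mod `2k`, `v 0 := v (2k)`). -/
def RCSetup.AlphaType (H : RCSetup G G') (k : ℕ) (v : ℕ → V) : Prop :=
  ∃ n₀ : ℕ, 1 ≤ n₀ ∧ ∀ t : ℕ, t < k →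
    (∀ i : ℕ, 1 ≤ i → i ≤ n₀ →
        (H.bSeq' (fun j => cyc k v (2 * t + j)) i).isSome ∧
        (H.bSeq (fun j => cyc k v (2 * t + j)) i).isSome) ∧
    (∀ i : ℕ, n₀ < i →
        H.bSeq' (fun j => cyc k v (2 * t + j)) i = none ∧
        H.bSeq (fun j => cyc k v (2 * t + j)) i = none) ∧
    H.bSeq' (fun j => cyc k v (2 * t + j)) n₀ = some (H.f (cyc k v (2 * t))) ∧
    H.bSeq (fun j => cyc k v (2 * t + j)) n₀ = some (cyc k v (2 * t + 1))

/-- `v 1, …, v (2k)` is a cycle with alternate normal-arrows and dashed-arrows. -/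
def RCSetup.IsAltCycle (H : RCSetup G G') (k : ℕ) (v : ℕ → V) : Prop :=
  ∀ i : ℕ, 1 ≤ i → i ≤ k →
    H.Normal (cyc k v (2 * i - 1)) (cyc k v (2 * i)) ∧
    H.Dashed (cyc k v (2 * i)) (cyc k v (2 * i + 1))

namespace RCSetup

lemma chainDown_outer (H : RCSetup G G') (w : ℕ → V) (lo m : ℕ) (z : Option (V ⊕ V')) :
    H.chainDown w lo (m + 1) z = (H.chainDown w (lo + 1) m z).bind (H.step w lo) := by
  induction m generalizing z with
  | zero => simp [chainDown]
  | succ m ih =>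
      have : H.chainDown w lo (m + 1 + 1) z
          = H.chainDown w lo (m + 1) (z.bind (H.step w (lo + (m + 1)))) := rfl
      rw [this, ih]
      have : H.chainDown w (lo + 1) (m + 1) z
          = H.chainDown w (lo + 1) m (z.bind (H.step w (lo + 1 + m))) := rfl
      rw [this]
      ring_nf

lemma step_shift (H : RCSetup G G') (w : ℕ → V) (j : ℕ) :
    H.step w (j + 2) = H.step (fun j => w (j + 2)) j := by
  funext x
  cases x with
  | inl x => simp [step, Nat.add_mod_right]
  | inr x => simp [step, Nat.add_mod_right]

lemma chainDown_shift (H : RCSetup G G') (w : ℕ → V) (lo m : ℕ) (z : Option (V ⊕ V')) :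
    H.chainDown w (lo + 2) m z = H.chainDown (fun j => w (j + 2)) lo m z := by
  induction m generalizing z with
  | zero => rfl
  | succ m ih =>
      show H.chainDown w (lo + 2) m (z.bind (H.step w (lo + 2 + m)))
          = H.chainDown (fun j => w (j + 2)) lo m (z.bind (H.step (fun j => w (j + 2)) (lo + m)))
      rw [ih]
      congr 2
      have : lo + 2 + m = (lo + m) + 2 := by ring
      rw [this, step_shift]

lemma inner_shift (H : RCSetup G G') (w : ℕ → V) (i : ℕ) :
    H.inner w (i + 2) = H.inner (fun j => w (j + 2)) i := by
  simp [inner, Nat.add_mod_right]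

lemma bSeq'_one (H : RCSetup G G') (w : ℕ → V) : H.bSeq' w 1 = some (H.f (w 1)) := by
  simp [bSeq', chainDown, inner]

lemma bSeq_one (H : RCSetup G G') (w : ℕ → V) : H.bSeq w 1 = some (w 2) := by
  simp [bSeq, chainDown, inner]

lemma bSeq'_succ (H : RCSetup G G') (w : ℕ → V) (i : ℕ) (hi : 1 ≤ i) :
    H.bSeq' w (i + 1) = (H.bSeq w i).bind (fun b => H.pphi (w 1) b) := by
  obtain ⟨m, rfl⟩ : ∃ m, i = m + 1 := ⟨i - 1, by omega⟩
  show (match H.chainDown w 1 (m + 1 + 1 - 1) (some (H.inner w (m + 1 + 1))) with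
    | some (Sum.inr y) => some y
    | _ => none) = _
  have h1 : m + 1 + 1 - 1 = m + 1 := rfl
  rw [h1, chainDown_outer]
  unfold bSeq
  have h2 : m + 1 - 1 = m := rfl
  rw [h2]
  rcases hr : H.chainDown w (1 + 1) m (some (H.inner w (m + 1 + 1))) with _ | (x | y)
  · simp [hr, chainDown]
  · rcases hp : H.pphi (w 1) x with _ | y' <;> simp [step, hr, hp]
  · simp [step, hr]

lemma bSeq_succ (H : RCSetup G G') (w : ℕ → V) (i : ℕ) (hi : 2 ≤ i) :
    H.bSeq w i = (H.bSeq' (fun j => w (j + 2)) (i - 1)).bind (fun y => H.pphiInv (w 2) y) := by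
  obtain ⟨m, rfl⟩ : ∃ m, i = m + 2 := ⟨i - 2, by omega⟩
  show (match H.chainDown w 2 (m + 2 - 1) (some (H.inner w (m + 2 + 1))) with
    | some (Sum.inl y) => some y
    | _ => none) = _
  have h1 : m + 2 - 1 = m + 1 := rfl
  rw [h1, chainDown_outer]
  have h2 : (2 : ℕ) + 1 = 1 + 2 := rfl
  rw [h2, chainDown_shift]
  have h3 : m + 2 + 1 = (m + 1) + 2 := by ring
  rw [h3, inner_shift]
  unfold bSeq'
  have h4 : m + 2 - 1 - 1 = m := rfl
  have h5 : m + 1 - 1 = m := rfl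
  rw [h5]
  rcases hr : H.chainDown (fun j => w (j + 2)) 1 m (some (H.inner (fun j => w (j + 2)) (m + 1))) with _ | (x | y)
  · simp
  · simp [step]
  · rcases hp : H.pphiInv (w 2) y with _ | x <;> simp [step, hp]

end RCSetup
namespace RCSetup

lemma pphi_ne (H : RCSetup G G') {a x : V} (h : x ≠ a) :
    H.pphi a x = some (H.φ a ⟨x, h⟩).1 := dif_pos h

lemma pphiInv_ne (H : RCSetup G G') {a : V} {x' : V'} (h : x' ≠ H.f a) :
    H.pphiInv a x' = some ((H.φ a).symm ⟨x', h⟩).1 := dif_pos h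

lemma pphi_isSome (H : RCSetup G G') {a x : V} (h : (H.pphi a x).isSome) :
    ∃ h' : x ≠ a, H.pphi a x = some (H.φ a ⟨x, h'⟩).1 := by
  by_cases h' : x ≠ a
  · exact ⟨h', dif_pos h'⟩
  · rw [pphi, dif_neg h'] at h; simp at h

lemma pphiInv_isSome (H : RCSetup G G') {a : V} {x' : V'} (h : (H.pphiInv a x').isSome) :
    ∃ h' : x' ≠ H.f a, H.pphiInv a x' = some ((H.φ a).symm ⟨x', h'⟩).1 := by
  by_cases h' : x' ≠ H.f a
  · exact ⟨h', dif_pos h'⟩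
  · rw [pphiInv, dif_neg h'] at h; simp at h

end RCSetup

lemma cyc_congr {k : ℕ} (v : ℕ → V) (hk : 0 < k) {m₁ m₂ : ℕ}
    (h : m₁ % (2 * k) = m₂ % (2 * k)) : cyc k v m₁ = cyc k v m₂ := by
  unfold cyc
  congr 1
  have e1 : m₁ + 2 * k - 1 = m₁ + (2 * k - 1) := by omega
  have e2 : m₂ + 2 * k - 1 = m₂ + (2 * k - 1) := by omega
  rw [e1, e2, Nat.add_mod m₁, Nat.add_mod m₂, h]

lemma cyc_eq_self {k : ℕ} (v : ℕ → V) (hk : 0 < k) {m : ℕ} (h1 : 1 ≤ m) (h2 : m ≤ 2 * k) :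
    cyc k v m = v m := by
  unfold cyc
  congr 1
  have : (m + 2 * k - 1) = (m - 1) + 1 * (2 * k) := by omega
  rw [this, Nat.add_mul_mod_self_right]
  have : (m - 1) % (2 * k) = m - 1 := Nat.mod_eq_of_lt (by omega)
  omega
lemma RCSetup.alpha_two_cycle (H : RCSetup G G') {k : ℕ} {v : ℕ → V} (hk : 0 < k)
    (hc : H.IsAltCycle k v) (hα : H.AlphaType k v) :
    ∃ u w : V, H.Normal u w ∧ H.Normal w u := by
  obtain ⟨n₀, hn₀, hA⟩ := hα
  have key_mod : ∀ t j : ℕ, (2 * t + j) % (2 * k) = (2 * (t % k) + j) % (2 * k) := by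
    intro t j
    have h := Nat.div_add_mod t k
    have e : 2 * t + j = 2 * (t % k) + j + (2 * k) * (t / k) := by
      conv_lhs => rw [← h]
      ring
    rw [e, Nat.add_mul_mod_self_left]
  -- α-type data for every t ∈ ℕ (not just t < k), via periodicity
  have hAall : ∀ t : ℕ,
      (∀ i : ℕ, 1 ≤ i → i ≤ n₀ →
          (H.bSeq' (fun j => cyc k v (2 * t + j)) i).isSome ∧
          (H.bSeq (fun j => cyc k v (2 * t + j)) i).isSome) ∧
      H.bSeq' (fun j => cyc k v (2 * t + j)) n₀ = some (H.f (cyc k v (2 * t))) ∧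
      H.bSeq (fun j => cyc k v (2 * t + j)) n₀ = some (cyc k v (2 * t + 1)) := by
    intro t
    have ht : t % k < k := Nat.mod_lt _ hk
    have hfun : (fun j => cyc k v (2 * t + j)) = (fun j => cyc k v (2 * (t % k) + j)) := by
      funext j; exact cyc_congr v hk (key_mod t j)
    have h0 : cyc k v (2 * t) = cyc k v (2 * (t % k)) := by
      have := key_mod t 0; simp only [Nat.add_zero] at this
      exact cyc_congr v hk this
    have h1 : cyc k v (2 * t + 1) = cyc k v (2 * (t % k) + 1) :=
      cyc_congr v hk (key_mod t 1)
    obtain ⟨hd, _, hterm', hterm⟩ := hA (t % k) ht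
    rw [hfun, h0, h1]
    exact ⟨hd, hterm', hterm⟩
  -- cycle arrows for every t ∈ ℕ
  have hCyc : ∀ t : ℕ, H.Normal (cyc k v (2 * t + 1)) (cyc k v (2 * t + 2)) ∧
      H.Dashed (cyc k v (2 * t + 2)) (cyc k v (2 * t + 3)) := by
    intro t
    have ht : t % k < k := Nat.mod_lt _ hk
    obtain ⟨hN, hD⟩ := hc (t % k + 1) (by omega) (by omega)
    have e1 : cyc k v (2 * (t % k + 1) - 1) = cyc k v (2 * t + 1) := by
      have e : 2 * (t % k + 1) - 1 = 2 * (t % k) + 1 := by omega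
      rw [e]; exact (cyc_congr v hk (key_mod t 1)).symm
    have e2 : cyc k v (2 * (t % k + 1)) = cyc k v (2 * t + 2) := by
      have e : 2 * (t % k + 1) = 2 * (t % k) + 2 := by omega
      rw [e]; exact (cyc_congr v hk (key_mod t 2)).symm
    have e3 : cyc k v (2 * (t % k + 1) + 1) = cyc k v (2 * t + 3) := by
      have e : 2 * (t % k + 1) + 1 = 2 * (t % k) + 3 := by omega
      rw [e]; exact (cyc_congr v hk (key_mod t 3)).symm
    rw [e1, e2] at hN
    rw [e2, e3] at hD
    exact ⟨hN, hD⟩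
  -- specialized successor formulas
  have seq'_succ : ∀ t i, 1 ≤ i →
      H.bSeq' (fun j => cyc k v (2 * t + j)) (i + 1)
        = (H.bSeq (fun j => cyc k v (2 * t + j)) i).bind
            (fun b => H.pphi (cyc k v (2 * t + 1)) b) :=
    fun t i hi => H.bSeq'_succ _ i hi
  have seq_succ : ∀ t i, 2 ≤ i →
      H.bSeq (fun j => cyc k v (2 * t + j)) i
        = (H.bSeq' (fun j => cyc k v (2 * (t + 1) + j)) (i - 1)).bind
            (fun y => H.pphiInv (cyc k v (2 * t + 2)) y) := by
    intro t i hi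
    have hfun : (fun j => (fun j' => cyc k v (2 * t + j')) (j + 2))
        = (fun j => cyc k v (2 * (t + 1) + j)) := by
      funext j
      show cyc k v (2 * t + (j + 2)) = cyc k v (2 * (t + 1) + j)
      congr 1; ring
    rw [H.bSeq_succ (fun j => cyc k v (2 * t + j)) i hi, hfun]
  -- n₀ ≥ 2
  have hn2 : 2 ≤ n₀ := by
    rcases Nat.lt_or_ge n₀ 2 with h | h
    · exfalso
      have hn1 : n₀ = 1 := by omega
      obtain ⟨_, _, hterm⟩ := hAall 0
      rw [hn1, H.bSeq_one] at hterm
      obtain ⟨hne, -, -⟩ := (hCyc 0).1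
      exact hne (Option.some.inj hterm)
    · exact h
  -- base cases of the adjacency propagation
  have base : ∀ t : ℕ, ∃ x₁ x₂, H.bSeq (fun j => cyc k v (2 * t + j)) 1 = some x₁ ∧
      H.bSeq (fun j => cyc k v (2 * t + j)) 2 = some x₂ ∧ G.Adj x₁ x₂ := by
    intro t
    obtain ⟨hne, -, hadj⟩ := (hCyc t).2
    refine ⟨cyc k v (2 * t + 2), ((H.φ (cyc k v (2 * t + 2))).symm ⟨H.f (cyc k v (2 * t + 3)), hne⟩).1,
      H.bSeq_one _, ?_, hadj⟩
    rw [seq_succ t 2 le_rfl, H.bSeq'_one]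
    have e : 2 * (t + 1) + 1 = 2 * t + 3 := by ring
    show H.pphiInv (cyc k v (2 * t + 2)) (H.f (cyc k v (2 * (t + 1) + 1))) = _
    rw [e]
    exact H.pphiInv_ne hne
  have base' : ∀ t : ℕ, ∃ y₁ y₂, H.bSeq' (fun j => cyc k v (2 * t + j)) 1 = some y₁ ∧
      H.bSeq' (fun j => cyc k v (2 * t + j)) 2 = some y₂ ∧ G'.Adj y₁ y₂ := by
    intro t
    obtain ⟨hne, -, hadj⟩ := (hCyc t).1
    refine ⟨H.f (cyc k v (2 * t + 1)), (H.φ (cyc k v (2 * t + 1)) ⟨cyc k v (2 * t + 2), hne⟩).1,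
      H.bSeq'_one _, ?_, hadj⟩
    rw [seq'_succ t 1 le_rfl, H.bSeq_one]
    show H.pphi (cyc k v (2 * t + 1)) (cyc k v (2 * t + 2)) = _
    exact H.pphi_ne hne
  -- propagation steps
  have stepB : ∀ t i, 1 ≤ i → i + 2 ≤ n₀ →
      (∃ x₁ x₂, H.bSeq (fun j => cyc k v (2 * t + j)) i = some x₁ ∧
        H.bSeq (fun j => cyc k v (2 * t + j)) (i + 1) = some x₂ ∧ G.Adj x₁ x₂) →
      (∃ y₁ y₂, H.bSeq' (fun j => cyc k v (2 * t + j)) (i + 1) = some y₁ ∧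
        H.bSeq' (fun j => cyc k v (2 * t + j)) (i + 2) = some y₂ ∧ G'.Adj y₁ y₂) := by
    rintro t i hi hin ⟨x₁, x₂, hx₁, hx₂, hadj⟩
    obtain ⟨hd, -, -⟩ := hAall t
    have h1 := (hd (i + 1) (by omega) (by omega)).1
    have h2 := (hd (i + 2) (by omega) (by omega)).1
    rw [seq'_succ t i hi, hx₁] at h1
    rw [show i + 2 = (i + 1) + 1 from rfl, seq'_succ t (i + 1) (by omega), hx₂] at h2
    have h1' : (H.pphi (cyc k v (2 * t + 1)) x₁).isSome := h1
    have h2' : (H.pphi (cyc k v (2 * t + 1)) x₂).isSome := h2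
    obtain ⟨hne₁, he₁⟩ := H.pphi_isSome h1'
    obtain ⟨hne₂, he₂⟩ := H.pphi_isSome h2'
    refine ⟨_, _, ?_, ?_, (H.adj_iff (cyc k v (2 * t + 1)) ⟨x₁, hne₁⟩ ⟨x₂, hne₂⟩).mp hadj⟩
    · rw [seq'_succ t i hi, hx₁]; exact he₁
    · rw [show i + 2 = (i + 1) + 1 from rfl, seq'_succ t (i + 1) (by omega), hx₂]; exact he₂
  have stepA : ∀ t i, 1 ≤ i → i + 2 ≤ n₀ →
      (∃ y₁ y₂, H.bSeq' (fun j => cyc k v (2 * (t + 1) + j)) i = some y₁ ∧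
        H.bSeq' (fun j => cyc k v (2 * (t + 1) + j)) (i + 1) = some y₂ ∧ G'.Adj y₁ y₂) →
      (∃ x₁ x₂, H.bSeq (fun j => cyc k v (2 * t + j)) (i + 1) = some x₁ ∧
        H.bSeq (fun j => cyc k v (2 * t + j)) (i + 2) = some x₂ ∧ G.Adj x₁ x₂) := by
    rintro t i hi hin ⟨y₁, y₂, hy₁, hy₂, hadj⟩
    obtain ⟨hd, -, -⟩ := hAall t
    have h1 := (hd (i + 1) (by omega) (by omega)).2
    have h2 := (hd (i + 2) (by omega) (by omega)).2
    rw [seq_succ t (i + 1) (by omega)] at h1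
    rw [seq_succ t (i + 2) (by omega)] at h2
    rw [show i + 1 - 1 = i from rfl, hy₁] at h1
    rw [show i + 2 - 1 = i + 1 from rfl, hy₂] at h2
    have h1' : (H.pphiInv (cyc k v (2 * t + 2)) y₁).isSome := h1
    have h2' : (H.pphiInv (cyc k v (2 * t + 2)) y₂).isSome := h2
    obtain ⟨hne₁, he₁⟩ := H.pphiInv_isSome h1'
    obtain ⟨hne₂, he₂⟩ := H.pphiInv_isSome h2'
    refine ⟨((H.φ (cyc k v (2 * t + 2))).symm ⟨y₁, hne₁⟩).1,
      ((H.φ (cyc k v (2 * t + 2))).symm ⟨y₂, hne₂⟩).1, ?_, ?_, ?_⟩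
    · rw [seq_succ t (i + 1) (by omega), show i + 1 - 1 = i from rfl, hy₁]; exact he₁
    · rw [seq_succ t (i + 2) (by omega), show i + 2 - 1 = i + 1 from rfl, hy₂]; exact he₂
    · apply (H.adj_iff (cyc k v (2 * t + 2)) ((H.φ _).symm ⟨y₁, hne₁⟩) ((H.φ _).symm ⟨y₂, hne₂⟩)).mpr
      rw [Equiv.apply_symm_apply, Equiv.apply_symm_apply]
      exact hadj
  -- main induction
  have main : ∀ i, 1 ≤ i → i + 1 ≤ n₀ → ∀ t,
      (∃ x₁ x₂, H.bSeq (fun j => cyc k v (2 * t + j)) i = some x₁ ∧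
        H.bSeq (fun j => cyc k v (2 * t + j)) (i + 1) = some x₂ ∧ G.Adj x₁ x₂) ∧
      (∃ y₁ y₂, H.bSeq' (fun j => cyc k v (2 * t + j)) i = some y₁ ∧
        H.bSeq' (fun j => cyc k v (2 * t + j)) (i + 1) = some y₂ ∧ G'.Adj y₁ y₂) := by
    intro i
    induction i with
    | zero => omega
    | succ i ih =>
        intro h1 h2 t
        by_cases hi0 : i = 0
        · subst hi0
          exact ⟨base t, base' t⟩
        · have hi : 1 ≤ i := by omega
          have hIH := ih hi (by omega)
          exact ⟨stepA t i hi (by omega) (hIH (t + 1)).2, stepB t i hi (by omega) (hIH t).1⟩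
  -- conclusion
  obtain ⟨-, hP'⟩ := main (n₀ - 1) (by omega) (by omega) 1
  rw [show n₀ - 1 + 1 = n₀ by omega] at hP'
  obtain ⟨y₁, y₂, hy₁, hy₂, hadj⟩ := hP'
  obtain ⟨-, hterm'₁, -⟩ := hAall 1
  rw [hy₂] at hterm'₁
  have hy₂eq : y₂ = H.f (cyc k v (2 * 1)) := Option.some.inj hterm'₁
  obtain ⟨-, -, hterm₀⟩ := hAall 0
  have hs := seq_succ 0 n₀ hn2
  rw [hterm₀, show (0 : ℕ) + 1 = 1 from rfl, hy₁] at hs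
  have hsome : H.pphiInv (cyc k v (2 * 0 + 2)) y₁ = some (cyc k v (2 * 0 + 1)) := hs.symm
  have hiss : (H.pphiInv (cyc k v (2 * 0 + 2)) y₁).isSome := by rw [hsome]; rfl
  obtain ⟨hne, he⟩ := H.pphiInv_isSome hiss
  rw [he] at hsome
  have hval : ((H.φ (cyc k v (2 * 0 + 2))).symm ⟨y₁, hne⟩).1 = cyc k v (2 * 0 + 1) :=
    Option.some.inj hsome
  obtain ⟨hne₁₂, hnadj, -⟩ := (hCyc 0).1
  have h' : cyc k v (2 * 0 + 1) ≠ cyc k v (2 * 0 + 2) := fun h => hne₁₂ h.symm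
  have hφeq : H.φ (cyc k v (2 * 0 + 2)) ⟨cyc k v (2 * 0 + 1), h'⟩ = ⟨y₁, hne⟩ := by
    rw [show (⟨cyc k v (2 * 0 + 1), h'⟩ : {w // w ≠ cyc k v (2 * 0 + 2)})
        = (H.φ (cyc k v (2 * 0 + 2))).symm ⟨y₁, hne⟩ from Subtype.ext hval.symm]
    exact (H.φ _).apply_symm_apply _
  refine ⟨cyc k v (2 * 0 + 1), cyc k v (2 * 0 + 2), (hCyc 0).1, ?_⟩
  refine ⟨h', fun h => hnadj h.symm, ?_⟩
  rw [hφeq]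
  have : H.f (cyc k v (2 * 1)) = H.f (cyc k v (2 * 0 + 2)) := by norm_num
  rw [this] at hy₂eq
  show G'.Adj (H.f (cyc k v (2 * 0 + 2))) y₁
  rw [← hy₂eq]
  exact hadj.symm
lemma deg_sum_aux {α : Type*} [Fintype α] (Γ : SimpleGraph α) (a : α) :
    (∑ u : {w : α // w ≠ a}, Fintype.card {x : α // x ≠ a ∧ Γ.Adj u.1 x})
      + 2 * Fintype.card {x : α // Γ.Adj a x}
    = ∑ u : α, Fintype.card {x : α // Γ.Adj u x} := by
  classical
  have hmem : ∀ x : α, x ∈ Finset.univ.erase a ↔ x ≠ a := by simp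
  rw [← Finset.sum_subtype (Finset.univ.erase a) hmem
    (fun u => Fintype.card {x : α // x ≠ a ∧ Γ.Adj u x})]
  have split : ∀ u : α, Fintype.card {x : α // x ≠ a ∧ Γ.Adj u x}
      + (if Γ.Adj u a then 1 else 0) = Fintype.card {x : α // Γ.Adj u x} := by
    intro u
    rw [Fintype.card_subtype, Fintype.card_subtype]
    have he : Finset.univ.filter (fun x => x ≠ a ∧ Γ.Adj u x)
        = (Finset.univ.filter (fun x => Γ.Adj u x)).erase a := by
      ext x
      simp only [Finset.mem_filter, Finset.mem_erase, Finset.mem_univ, true_and]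
    rw [he]
    by_cases h : Γ.Adj u a
    · rw [if_pos h]
      have hm : a ∈ Finset.univ.filter (fun x => Γ.Adj u x) := by simp [h]
      have hpos : 0 < (Finset.univ.filter (fun x => Γ.Adj u x)).card :=
        Finset.card_pos.mpr ⟨a, hm⟩
      rw [Finset.card_erase_of_mem hm]
      omega
    · rw [if_neg h, Finset.erase_eq_of_notMem (by simp [h])]
      omega
  have step1 : ∑ u ∈ Finset.univ.erase a, Fintype.card {x : α // x ≠ a ∧ Γ.Adj u x}
      + ∑ u ∈ Finset.univ.erase a, (if Γ.Adj u a then 1 else 0)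
      = ∑ u ∈ Finset.univ.erase a, Fintype.card {x : α // Γ.Adj u x} := by
    rw [← Finset.sum_add_distrib]
    exact Finset.sum_congr rfl (fun u _ => split u)
  have step2 : ∑ u ∈ Finset.univ.erase a, (if Γ.Adj u a then 1 else 0)
      = Fintype.card {x : α // Γ.Adj a x} := by
    rw [Finset.sum_erase _ (by simp [Γ.irrefl])]
    rw [← Finset.card_filter]
    rw [Fintype.card_subtype]
    congr 1
    ext u
    simp [Γ.adj_comm]
  have step3 : ∑ u ∈ Finset.univ.erase a, Fintype.card {x : α // Γ.Adj u x}
      + Fintype.card {x : α // Γ.Adj a x} = ∑ u : α, Fintype.card {x : α // Γ.Adj u x} :=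
    Finset.sum_erase_add _ _ (Finset.mem_univ a)
  omega

lemma RCSetup.deg_preserved [Fintype V] [Fintype V'] (H : RCSetup G G')
    (h3 : 3 ≤ Fintype.card V) (v : V) :
    Fintype.card {x : V // G.Adj v x} = Fintype.card {y : V' // G'.Adj (H.f v) y} := by
  classical
  have card_pres : ∀ (a : V) (u : {w : V // w ≠ a}),
      Fintype.card {x : V // x ≠ a ∧ G.Adj u.1 x}
        = Fintype.card {y : V' // y ≠ H.f a ∧ G'.Adj (H.φ a u).1 y} := by
    intro a u
    apply Fintype.card_congr
    refine ((Equiv.subtypeSubtypeEquivSubtypeInter _ _).symm.trans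
      (Equiv.subtypeEquiv (H.φ a) (fun x => H.adj_iff a u x))).trans
      (Equiv.subtypeSubtypeEquivSubtypeInter _ _)
  have hSS' : ∀ a : V,
      (∑ u : {w : V // w ≠ a}, Fintype.card {x : V // x ≠ a ∧ G.Adj u.1 x})
        = ∑ u' : {w' : V' // w' ≠ H.f a}, Fintype.card {y : V' // y ≠ H.f a ∧ G'.Adj u'.1 y} := by
    intro a
    rw [← Equiv.sum_comp (H.φ a)
      (fun u' => Fintype.card {y : V' // y ≠ H.f a ∧ G'.Adj u'.1 y})]
    exact Finset.sum_congr rfl (fun u _ => card_pres a u)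
  have key : ∀ a : V,
      (∑ u : V, Fintype.card {x : V // G.Adj u x})
        + 2 * Fintype.card {y : V' // G'.Adj (H.f a) y}
      = (∑ u' : V', Fintype.card {y : V' // G'.Adj u' y})
        + 2 * Fintype.card {x : V // G.Adj a x} := by
    intro a
    have h1 := deg_sum_aux G a
    have h2 := deg_sum_aux G' (H.f a)
    have h4 := hSS' a
    omega
  have hsum1 : ∑ a : V, Fintype.card {y : V' // G'.Adj (H.f a) y}
      = ∑ u' : V', Fintype.card {y : V' // G'.Adj u' y} :=
    Equiv.sum_comp H.f (fun u' => Fintype.card {y : V' // G'.Adj u' y})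
  -- abbreviations
  set E := ∑ u : V, Fintype.card {x : V // G.Adj u x} with hEdef
  set E' := ∑ u' : V', Fintype.card {y : V' // G'.Adj u' y} with hE'def
  have hsum : (Fintype.card V) * E + 2 * E' = (Fintype.card V) * E' + 2 * E := by
    have t1 : ∑ a : V, (E + 2 * Fintype.card {y : V' // G'.Adj (H.f a) y})
        = ∑ a : V, (E' + 2 * Fintype.card {x : V // G.Adj a x}) :=
      Finset.sum_congr rfl (fun a _ => key a)
    rw [Finset.sum_add_distrib, Finset.sum_add_distrib, Finset.sum_const, Finset.sum_const,
      ← Finset.mul_sum, ← Finset.mul_sum, hsum1, Finset.card_univ, smul_eq_mul, smul_eq_mul,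
      ← hEdef] at t1
    omega
  have hEE' : E = E' := by
    have hz : (Fintype.card V : ℤ) * E + 2 * E' = (Fintype.card V) * E' + 2 * E := by
      exact_mod_cast hsum
    have hzz : ((Fintype.card V : ℤ) - 2) * ((E : ℤ) - E') = 0 := by linear_combination hz
    rcases mul_eq_zero.mp hzz with h | h
    · exfalso
      have : (3 : ℤ) ≤ (Fintype.card V : ℤ) := by exact_mod_cast h3
      omega
    · have : (E : ℤ) = E' := by omega
      exact_mod_cast this
  have := key v
  omega

lemma RCSetup.exists_dashed [Fintype V] [Fintype V'] (H : RCSetup G G')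
    (h3 : 3 ≤ Fintype.card V) (v : V) (hex : ∃ u, H.Normal v u) : ∃ u, H.Dashed v u := by
  classical
  by_contra hno
  push_neg at hno
  -- partition identity
  have part : ∀ (R S : {y' : V' // y' ≠ H.f v} → Prop),
      Fintype.card {y' : {y' : V' // y' ≠ H.f v} // R y' ∧ S y'}
        + Fintype.card {y' : {y' : V' // y' ≠ H.f v} // R y' ∧ ¬ S y'}
      = Fintype.card {y' : {y' : V' // y' ≠ H.f v} // R y'} := by
    intro R S
    rw [Fintype.card_subtype, Fintype.card_subtype, Fintype.card_subtype]
    have h1 : Finset.univ.filter (fun y' => R y' ∧ S y')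
        = (Finset.univ.filter R).filter S := by
      ext y'; simp [and_assoc]
    have h2 : Finset.univ.filter (fun y' => R y' ∧ ¬ S y')
        = (Finset.univ.filter R).filter (fun y' => ¬ S y') := by
      ext y'; simp [and_assoc]
    rw [h1, h2, Finset.card_filter_add_card_filter_not]
  have hP : Fintype.card {y' : {y' : V' // y' ≠ H.f v} // G'.Adj (H.f v) y'.1}
      = Fintype.card {y : V' // G'.Adj (H.f v) y} :=
    Fintype.card_congr ⟨fun x => ⟨x.1.1, x.2⟩, fun y => ⟨⟨y.1, y.2.ne'⟩, y.2⟩,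
      fun _ => rfl, fun _ => rfl⟩
  have hQ : Fintype.card {y' : {y' : V' // y' ≠ H.f v} // G.Adj v ((H.φ v).symm y').1}
      = Fintype.card {x : V // G.Adj v x} := by
    apply Fintype.card_congr
    refine Equiv.trans (Equiv.subtypeEquiv (q := fun x : {w : V // w ≠ v} => G.Adj v x.1)
      (H.φ v).symm (fun y' => Iff.rfl)) ?_
    exact ⟨fun x => ⟨x.1.1, x.2⟩, fun x => ⟨⟨x.1, x.2.ne'⟩, x.2⟩, fun _ => rfl, fun _ => rfl⟩
  have hPQ : Fintype.card {y' : {y' : V' // y' ≠ H.f v} // G'.Adj (H.f v) y'.1}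
      = Fintype.card {y' : {y' : V' // y' ≠ H.f v} // G.Adj v ((H.φ v).symm y').1} := by
    rw [hP, hQ, H.deg_preserved h3 v]
  have hdash : Fintype.card
      {y' : {y' : V' // y' ≠ H.f v} // G.Adj v ((H.φ v).symm y').1 ∧ ¬ G'.Adj (H.f v) y'.1} = 0 := by
    rw [Fintype.card_eq_zero_iff]
    refine ⟨fun z => ?_⟩
    obtain ⟨⟨y', hy'⟩, hQ', hnP⟩ := z
    apply hno (H.f.symm y')
    have hf : H.f (H.f.symm y') = y' := H.f.apply_symm_apply y'
    refine ⟨by rw [hf]; exact hy', by rw [hf]; exact hnP, ?_⟩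
    have hsub : (⟨H.f (H.f.symm y'), by rw [hf]; exact hy'⟩ : {w' : V' // w' ≠ H.f v})
        = ⟨y', hy'⟩ := Subtype.ext hf
    rw [hsub]
    exact hQ'
  have hnorm : 0 < Fintype.card
      {y' : {y' : V' // y' ≠ H.f v} // G'.Adj (H.f v) y'.1 ∧ ¬ G.Adj v ((H.φ v).symm y').1} := by
    rw [Fintype.card_pos_iff]
    obtain ⟨u, h, hnadj, hadj⟩ := hex
    refine ⟨⟨H.φ v ⟨u, h⟩, hadj, ?_⟩⟩
    rw [Equiv.symm_apply_apply]
    exact hnadj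
  have hcomm : Fintype.card
        {y' : {y' : V' // y' ≠ H.f v} // G'.Adj (H.f v) y'.1 ∧ G.Adj v ((H.φ v).symm y').1}
      = Fintype.card
        {y' : {y' : V' // y' ≠ H.f v} // G.Adj v ((H.φ v).symm y').1 ∧ G'.Adj (H.f v) y'.1} :=
    Fintype.card_congr (Equiv.subtypeEquivRight (fun _ => and_comm))
  have e1 := part (fun y' => G'.Adj (H.f v) y'.1) (fun y' => G.Adj v ((H.φ v).symm y').1)
  have e2 := part (fun y' => G.Adj v ((H.φ v).symm y').1) (fun y' => G'.Adj (H.f v) y'.1)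
  omega
lemma RCSetup.exists_cycle [Fintype V] [Fintype V'] (H : RCSetup G G')
    (h3 : 3 ≤ Fintype.card V) (hall : ∀ x : V, ∃ u, H.Normal x u) :
    ∃ (k : ℕ) (v : ℕ → V), 0 < k ∧ H.IsAltCycle k v := by
  classical
  choose na hna using hall
  have hdash : ∀ x : V, ∃ u, H.Dashed x u := fun x => H.exists_dashed h3 x ⟨na x, hna x⟩
  choose da hda using hdash
  set g : V → V := fun x => da (na x) with hg
  have hne : Nonempty V := Fintype.card_pos_iff.mp (by omega)
  obtain ⟨x0⟩ := hne
  obtain ⟨m, n, hmn, heq⟩ := Finite.exists_ne_map_eq_of_infinite (fun i : ℕ => g^[i] x0)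
  have hkey : ∃ (p : ℕ) (x : V), 0 < p ∧ g^[p] x = x := by
    rcases lt_or_gt_of_ne hmn with h | h
    · refine ⟨n - m, g^[m] x0, by omega, ?_⟩
      rw [← Function.iterate_add_apply, show n - m + m = n by omega]
      exact heq.symm
    · refine ⟨m - n, g^[n] x0, by omega, ?_⟩
      rw [← Function.iterate_add_apply, show m - n + n = m by omega]
      exact heq
  obtain ⟨p, x, hp, hpx⟩ := hkey
  refine ⟨p, fun j => if j % 2 = 1 then g^[(j - 1) / 2] x else na (g^[j / 2 - 1] x), hp, ?_⟩
  intro i h1 h2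
  have hv1 : cyc p (fun j => if j % 2 = 1 then g^[(j - 1) / 2] x else na (g^[j / 2 - 1] x))
      (2 * i - 1) = g^[i - 1] x := by
    rw [cyc_eq_self _ hp (by omega) (by omega)]
    show (if (2 * i - 1) % 2 = 1 then g^[(2 * i - 1 - 1) / 2] x
      else na (g^[(2 * i - 1) / 2 - 1] x)) = _
    rw [if_pos (by omega), show (2 * i - 1 - 1) / 2 = i - 1 by omega]
  have hv2 : cyc p (fun j => if j % 2 = 1 then g^[(j - 1) / 2] x else na (g^[j / 2 - 1] x))
      (2 * i) = na (g^[i - 1] x) := by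
    rw [cyc_eq_self _ hp (by omega) (by omega)]
    show (if (2 * i) % 2 = 1 then g^[(2 * i - 1) / 2] x
      else na (g^[(2 * i) / 2 - 1] x)) = _
    rw [if_neg (by omega), show (2 * i) / 2 - 1 = i - 1 by omega]
  have hv3 : cyc p (fun j => if j % 2 = 1 then g^[(j - 1) / 2] x else na (g^[j / 2 - 1] x))
      (2 * i + 1) = g^[i] x := by
    rcases Nat.lt_or_ge i p with hik | hik
    · rw [cyc_eq_self _ hp (by omega) (by omega)]
      show (if (2 * i + 1) % 2 = 1 then g^[(2 * i + 1 - 1) / 2] x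
        else na (g^[(2 * i + 1) / 2 - 1] x)) = _
      rw [if_pos (by omega), show (2 * i + 1 - 1) / 2 = i by omega]
    · have hip : i = p := by omega
      rw [hip]
      have hcong : cyc p (fun j => if j % 2 = 1 then g^[(j - 1) / 2] x
          else na (g^[j / 2 - 1] x)) (2 * p + 1)
          = cyc p (fun j => if j % 2 = 1 then g^[(j - 1) / 2] x
          else na (g^[j / 2 - 1] x)) 1 := by
        apply cyc_congr _ hp
        have e1 : (2 * p + 1) % (2 * p) = 1 % (2 * p) := Nat.add_mod_left (2 * p) 1
        rw [e1]
      rw [hcong, cyc_eq_self _ hp (by omega) (by omega)]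
      show (if 1 % 2 = 1 then g^[(1 - 1) / 2] x else na (g^[1 / 2 - 1] x)) = _
      rw [if_pos rfl]
      show x = g^[p] x
      exact hpx.symm
  constructor
  · rw [hv1, hv2]; exact hna _
  · rw [hv2, hv3]
    have hgi : g^[i] x = da (na (g^[i - 1] x)) := by
      rw [show i = (i - 1) + 1 by omega, Function.iterate_succ_apply']
      rfl
    rw [hgi]
    exact hda _

/-- Trichotomy for the associated directed graph: (I) some vertex has no normal-arrow arising
from it; (II) there are vertices `u, w` with normal-arrows `u ⟶ w` and `w ⟶ u`; or
(III) there exists a cycle with alternate normal-arrows and dashed-arrows, and every such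
cycle is β-type (i.e. not α-type). -/
theorem stmt_5 [Fintype V] [Fintype V']
    (h3 : 3 ≤ Fintype.card V) (h3' : 3 ≤ Fintype.card V')
    (H : RCSetup G G') :
    (∃ v : V, ∀ w : V, ¬ H.Normal v w) ∨
    (∃ u w : V, H.Normal u w ∧ H.Normal w u) ∨
    ((∃ (k : ℕ) (v : ℕ → V), 0 < k ∧ H.IsAltCycle k v) ∧
      ∀ (k : ℕ) (v : ℕ → V), 0 < k → H.IsAltCycle k v → ¬ H.AlphaType k v) := by
  classical
  by_cases hI : ∃ v : V, ∀ w : V, ¬ H.Normal v w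
  · exact Or.inl hI
  · push_neg at hI
    by_cases hII : ∃ u w : V, H.Normal u w ∧ H.Normal w u
    · exact Or.inr (Or.inl hII)
    · refine Or.inr (Or.inr ⟨H.exists_cycle h3 hI, ?_⟩)
      intro k v hk hc hα
      exact hII (H.alpha_two_cycle hk hc hα)
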